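/- For every n ≥ 2, any proper coloring of the underlying undirected graph of D_n with colors from {1, …, n−1} leads to a contradiction: if each copy D_{n−1}^i contains a vertex x_i of color i, then the transversal vertex v_T for T = (x_1,…,x_{n−1}) has no available color. -/

import Mathlib

/-- Vertex set of the digraph `D (n+1)` from the paper (`Vtx n` = vertices of `D_{n+1}`). -/
def Vtx : ℕ → Type
  | 0 => Unit
  | (n+1) => (Fin (n+1) × Vtx n) ⊕ ((i : Fin (n+1)) → Vtx n)

/-- Edge relation of `D_{n+1}`. -/
def DEdge : (n : ℕ) → Vtx n → Vtx n → Prop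
  | 0, _, _ => False
  | (n+1), Sum.inl (i, x), Sum.inl (j, y) => i = j ∧ DEdge n x y
  | (n+1), Sum.inl (i, x), Sum.inr T => T i = x
  | (_+1), Sum.inr _, _ => False

/-- There is a directed walk of length `k` from `u` to `v`. -/
def WalkLen {V : Type*} (E : V → V → Prop) (u v : V) (k : ℕ) : Prop :=
  ∃ f : Fin (k+1) → V, f 0 = u ∧ f (Fin.last k) = v ∧
    ∀ i : Fin k, E (f i.castSucc) (f i.succ)

/-- `l` is a directed path (as a list of distinct vertices) from `u` to `v`. -/
def IsDPath {V : Type*} (E : V → V → Prop) (u v : V) (l : List V) : Prop :=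
  l.Chain' E ∧ l.Nodup ∧ l.head? = some u ∧ l.getLast? = some v

/-- Positive edges of `D'`. -/
def PosE {V : Type*} (E : V → V → Prop) (u v : V) : Prop :=
  ∃ k, k % 3 = 1 ∧ WalkLen E u v k

/-- Negative edges of `D'`. -/
def NegE {V : Type*} (E : V → V → Prop) (u v : V) : Prop :=
  ∃ k, k % 3 = 2 ∧ WalkLen E v u k

/-- Edge relation of `D_{n+1}'`. -/
def DEdge' (n : ℕ) (u v : Vtx n) : Prop :=
  PosE (DEdge n) u v ∨ NegE (DEdge n) u v

/-- Underlying undirected graph of a digraph. -/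
def underSG {V : Type*} (E : V → V → Prop) : SimpleGraph V :=
  SimpleGraph.fromRel E

/-- `G_{n+1}`, the underlying undirected graph of `D_{n+1}'`. -/
def Gn (n : ℕ) : SimpleGraph (Vtx n) := underSG (DEdge' n)

/-- A digraph is acyclic iff no vertex lies on a directed cycle. -/
def DAcyclic {V : Type*} (E : V → V → Prop) : Prop :=
  ∀ v : V, ¬ Relation.TransGen E v v

/-- `k`-dicolorability. -/
def Dicolorable {V : Type*} (E : V → V → Prop) (k : ℕ) : Prop :=
  ∃ f : V → Fin k, ∀ c : Fin k,
    DAcyclic (fun a b => E a b ∧ f a = c ∧ f b = c)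

/-- `D` has an induced directed cycle of odd length at least 5. -/
def HasInducedOddCycle {V : Type*} (E : V → V → Prop) : Prop :=
  ∃ m : ℕ, 5 ≤ m ∧ Odd m ∧ ∃ f : ZMod m → V, Function.Injective f ∧
    (∀ i, E (f i) (f (i+1))) ∧ (∀ i j, E (f i) (f j) → j = i + 1)
/-- for `n ≥ 2` the underlying graph of `D_n` is not `(n-1)`-colorable
(here `Vtx (n+1)` is `D_{n+2}`, which is not `(n+1)`-colorable). -/

lemma Dn_not_colorable_aux : ∀ n : ℕ, ¬ (underSG (DEdge n)).Colorable n := by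
  intro n
  induction n with
  | zero =>
    rintro ⟨C⟩
    exact (C (show Vtx 0 from ())).elim0
  | succ n ih =>
    rintro ⟨C⟩
    -- each copy uses every color
    have key : ∀ (i j : Fin (n+1)), ∃ x : Vtx n, C (Sum.inl (i, x)) = j := by
      intro i j
      by_contra hne
      push_neg at hne
      apply ih
      refine ⟨SimpleGraph.Coloring.mk
        (fun x => (finSuccEquiv' j (C (Sum.inl (i, x)))).get ?_) ?_⟩
      · rw [Option.isSome_iff_ne_none]
        intro h
        exact hne x ((finSuccEquiv' j).injective (h.trans (finSuccEquiv'_at j).symm))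
      · intro x y hadj hc
        rw [underSG, SimpleGraph.fromRel_adj] at hadj
        obtain ⟨hxy, he⟩ := hadj
        have hadj' : (underSG (DEdge (n+1))).Adj (Sum.inl (i, x)) (Sum.inl (i, y)) := by
          refine (SimpleGraph.fromRel_adj _ _ _).mpr ?_
          constructor
          · intro h
            injection h with h'
            exact hxy (congrArg Prod.snd h')
          · rcases he with h | h
            · exact Or.inl ⟨rfl, h⟩
            · exact Or.inr ⟨rfl, h⟩
        apply C.valid hadj'
        have hs1 : ((finSuccEquiv' j) (C (Sum.inl (i, x)))).isSome := by
          rw [Option.isSome_iff_ne_none]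
          intro h
          exact hne x ((finSuccEquiv' j).injective (h.trans (finSuccEquiv'_at j).symm))
        have hs2 : ((finSuccEquiv' j) (C (Sum.inl (i, y)))).isSome := by
          rw [Option.isSome_iff_ne_none]
          intro h
          exact hne y ((finSuccEquiv' j).injective (h.trans (finSuccEquiv'_at j).symm))
        have heq : (finSuccEquiv' j) (C (Sum.inl (i, x)))
            = (finSuccEquiv' j) (C (Sum.inl (i, y))) := by
          rw [← Option.some_get hs1, ← Option.some_get hs2]
          exact congrArg some hc
        exact (finSuccEquiv' j).injective heq
    choose x hx using fun i => key i i
    set T : (i : Fin (n+1)) → Vtx n := x with hT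
    have hadj : ∀ i : Fin (n+1), (underSG (DEdge (n+1))).Adj (Sum.inl (i, x i)) (Sum.inr T) := by
      intro i
      refine (SimpleGraph.fromRel_adj _ _ _).mpr ?_
      exact ⟨Sum.inl_ne_inr (a := (i, x i)) (b := T), Or.inl rfl⟩
    have := C.valid (hadj (C (Sum.inr T)))
    rw [hx] at this
    exact this rfl

theorem Dn_not_colorable (n : ℕ) : ¬ (underSG (DEdge (n+1))).Colorable (n+1) := Dn_not_colorable_aux (n+1)
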